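/- Let v̂_n(z) = (zⁿ, …, z, 1) and let α ∈ SL(2,ℝ). Then for each ν ≥ 0, the ν-th derivative satisfies ((D^ν v̂_n) |_{−n+2ν} α)(z) = Σ_{ℓ=0}^{ν} [(−1)^{ν−ℓ} ν! (n−ℓ)! / (ℓ! (ν−ℓ)! (n−ν)!)] · 𝔎(α,z)^{ν−ℓ} · D^ℓ(v̂_n |_{−n} α)(z). -/

import Mathlib

open Matrix Complex Finset

abbrev SL2R := Matrix.SpecialLinearGroup (Fin 2) ℝ

noncomputable def Jf (γ : SL2R) (z : ℂ) : ℂ := (γ.1 1 0 : ℝ) * z + (γ.1 1 1 : ℝ)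

noncomputable def Kf (γ : SL2R) (z : ℂ) : ℂ := (γ.1 1 0 : ℝ) / Jf γ z

noncomputable def actSL (γ : SL2R) (z : ℂ) : ℂ :=
  ((γ.1 0 0 : ℝ) * z + (γ.1 0 1 : ℝ)) / Jf γ z

/-- The vector (z₁, z₂)^n. -/
def symVec (n : ℕ) (z₁ z₂ : ℂ) : Fin (n + 1) → ℂ :=
  fun i => z₁ ^ (n - (i : ℕ)) * z₂ ^ (i : ℕ)

/-- v̂_n(z) = (zⁿ, …, z, 1). -/
def vhat (n : ℕ) (z : ℂ) : Fin (n + 1) → ℂ := symVec n z 1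

lemma detC (α : SL2R) :
    ((α.1 0 0 : ℝ) : ℂ) * ((α.1 1 1 : ℝ) : ℂ) - ((α.1 0 1 : ℝ) : ℂ) * ((α.1 1 0 : ℝ) : ℂ) = 1 := by
  have h : α.1 0 0 * α.1 1 1 - α.1 0 1 * α.1 1 0 = 1 := by
    have := α.2
    rwa [Matrix.det_fin_two] at this
  exact_mod_cast congrArg (fun x : ℝ => (x : ℂ)) h

lemma Jf_ne_zero (α : SL2R) {z : ℂ} (hz : 0 < z.im) : Jf α z ≠ 0 := by
  intro h
  have him : (α.1 1 0 : ℝ) * z.im = 0 := by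
    have := congrArg Complex.im h
    simpa [Jf] using this
  rcases mul_eq_zero.1 him with hc | hzim
  · have hre : (α.1 1 1 : ℝ) = 0 := by
      have := congrArg Complex.re h
      simpa [Jf, hc] using this
    have := detC α
    rw [show ((α.1 1 0 : ℝ) : ℂ) = 0 from by exact_mod_cast congrArg (fun x : ℝ => (x:ℂ)) hc,
      show ((α.1 1 1 : ℝ) : ℂ) = 0 from by exact_mod_cast congrArg (fun x : ℝ => (x:ℂ)) hre] at this
    simp at this
  · exact absurd hzim (ne_of_gt hz)

lemma hasDerivAt_Jf (α : SL2R) (z : ℂ) :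
    HasDerivAt (Jf α) ((α.1 1 0 : ℝ) : ℂ) z := by
  unfold Jf
  simpa using ((hasDerivAt_id z).const_mul (((α.1 1 0 : ℝ)) : ℂ)).add_const ((α.1 1 1 : ℝ) : ℂ)

lemma hasDerivAt_actSL (α : SL2R) {z : ℂ} (hz : 0 < z.im) :
    HasDerivAt (actSL α) ((Jf α z ^ 2)⁻¹) z := by
  have hnum : HasDerivAt (fun w : ℂ => ((α.1 0 0 : ℝ) : ℂ) * w + ((α.1 0 1 : ℝ) : ℂ))
      ((α.1 0 0 : ℝ) : ℂ) z := by
    simpa using ((hasDerivAt_id z).const_mul (((α.1 0 0 : ℝ)) : ℂ)).add_const ((α.1 0 1 : ℝ) : ℂ)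
  have h := hnum.div (hasDerivAt_Jf α z) (Jf_ne_zero α hz)
  refine h.congr_deriv (Eq.symm ?_)
  have hne := Jf_ne_zero α hz
  rw [eq_div_iff (pow_ne_zero 2 hne), inv_mul_cancel₀ (pow_ne_zero 2 hne)]
  simp only [Jf]
  linear_combination -detC α

lemma hasDerivAt_Kf (α : SL2R) {z : ℂ} (hz : 0 < z.im) :
    HasDerivAt (Kf α) (-(Kf α z ^ 2)) z := by
  have hne := Jf_ne_zero α hz
  have h := (hasDerivAt_const z (((α.1 1 0 : ℝ)) : ℂ)).div (hasDerivAt_Jf α z) hne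
  refine h.congr_deriv (Eq.symm ?_)
  simp only [Kf]
  field_simp
  ring
noncomputable def Cc (n ν ℓ : ℕ) : ℂ :=
  (-1 : ℂ) ^ (ν - ℓ) * (ν.factorial : ℂ) * ((n - ℓ).factorial : ℂ) /
    ((ℓ.factorial : ℂ) * ((ν - ℓ).factorial : ℂ) * ((n - ν).factorial : ℂ))

lemma fact_ne (k : ℕ) : ((k.factorial : ℂ)) ≠ 0 := by
  exact_mod_cast Nat.factorial_ne_zero k

lemma Cc_diag (n ν : ℕ) : Cc n (ν + 1) (ν + 1) = Cc n ν ν := by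
  simp only [Cc, Nat.sub_self, pow_zero, Nat.factorial_zero, Nat.cast_one, one_mul, mul_one]
  rw [div_self (mul_ne_zero (fact_ne _) (fact_ne _)),
    div_self (mul_ne_zero (fact_ne _) (fact_ne _))]

lemma Cc_zero (n ν : ℕ) (hn : ν + 1 ≤ n) :
    Cc n (ν + 1) 0 = -(((n : ℂ) - ν - 0) * Cc n ν 0) := by
  obtain ⟨r, hr⟩ := Nat.exists_eq_add_of_le hn
  subst hr
  simp only [Cc, Nat.sub_zero, Nat.factorial_zero, Nat.cast_one, one_mul]
  rw [show ν + 1 + r - (ν + 1) = r from by omega, show ν + 1 + r - ν = r + 1 from by omega,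
    Nat.factorial_succ r]
  have h1 : ((r : ℂ) + 1) ≠ 0 := by exact_mod_cast r.succ_ne_zero
  push_cast
  have := fact_ne (ν+1); have := fact_ne ν; have := fact_ne r
  field_simp
  ring

lemma Cc_mid (n ν j : ℕ) (hj : j + 1 ≤ ν) (hn : ν + 1 ≤ n) :
    Cc n (ν + 1) (j + 1) = Cc n ν j + -((n : ℂ) - ν - (j + 1)) * Cc n ν (j + 1) := by
  obtain ⟨p, hp⟩ := Nat.exists_eq_add_of_le hj
  obtain ⟨r, hr⟩ := Nat.exists_eq_add_of_le hn
  subst hr hp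
  simp only [Cc]
  rw [show j + 1 + p + 1 - (j + 1) = p + 1 from by omega,
    show j + 1 + p + 1 + r - (j + 1) = p + r + 1 from by omega,
    show j + 1 + p + 1 + r - (j + 1 + p + 1) = r from by omega,
    show j + 1 + p - j = p + 1 from by omega,
    show j + 1 + p + 1 + r - j = p + r + 2 from by omega,
    show j + 1 + p + 1 + r - (j + 1 + p) = r + 1 from by omega,
    show j + 1 + p - (j + 1) = p from by omega,
    show (j + 1 + p + 1) = (j + 1 + p) + 1 from rfl,
    show p + r + 2 = (p + r + 1) + 1 from rfl,
    Nat.factorial_succ (j + 1 + p), Nat.factorial_succ (p + r + 1),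
    Nat.factorial_succ p, Nat.factorial_succ r, Nat.factorial_succ j]
  have h1 : ((p : ℂ) + 1) ≠ 0 := by exact_mod_cast p.succ_ne_zero
  have h2 : ((r : ℂ) + 1) ≠ 0 := by exact_mod_cast r.succ_ne_zero
  have h3 : ((j : ℂ) + 1) ≠ 0 := by exact_mod_cast j.succ_ne_zero
  push_cast
  rw [← mul_div_assoc,
    div_add_div _ _ (by apply_rules [mul_ne_zero, fact_ne, h1, h2, h3])
      (by apply_rules [mul_ne_zero, fact_ne, h1, h2, h3]),
    div_eq_div_iff (by apply_rules [mul_ne_zero, fact_ne, h1, h2, h3])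
      (by apply_rules [mul_ne_zero, fact_ne, h1, h2, h3])]
  ring

lemma aux_main (n : ℕ) (α : SL2R) : ∀ ν : ℕ, ν ≤ n → ∀ z : ℂ, 0 < z.im →
    Jf α z ^ ((n : ℤ) - 2 * ν) • iteratedDeriv ν (vhat n) (actSL α z) =
      ∑ ℓ ∈ Finset.range (ν + 1), (Cc n ν ℓ * Kf α z ^ (ν - ℓ)) •
          iteratedDeriv ℓ (fun w => Jf α w ^ n • vhat n (actSL α w)) z := by
  intro ν
  induction ν with
  | zero =>
        intro _ z hz
        have h0 : Cc n 0 0 = 1 := by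
          simp [Cc, div_self (fact_ne n)]
        rw [show (0 : ℕ) + 1 = 1 from rfl, Finset.sum_range_one]
        simp only [iteratedDeriv_zero, Nat.sub_zero, pow_zero, mul_one,
          Nat.cast_zero, mul_zero, sub_zero, h0, one_smul, Nat.sub_self]
        rw [zpow_natCast]
  | succ ν IH =>
        intro hν z hz
        have hν' : ν ≤ n := by omega
        have hSopen : IsOpen {w : ℂ | 0 < w.im} := isOpen_lt continuous_const Complex.continuous_im
        have hzS : z ∈ {w : ℂ | 0 < w.im} := hz
        have hne := Jf_ne_zero α hz
        -- analyticity facts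
        have hJ_an : ∀ w : ℂ, AnalyticAt ℂ (Jf α) w := fun w =>
          (analyticAt_const.mul analyticAt_id).add analyticAt_const
        have hv_an : ∀ w : ℂ, AnalyticAt ℂ (vhat n) w := fun w =>
          AnalyticAt.pi fun i => (analyticAt_id.pow _).mul analyticAt_const
        have hact_an : ∀ w ∈ {w : ℂ | 0 < w.im}, AnalyticAt ℂ (actSL α) w := fun w hw =>
          ((analyticAt_const.mul analyticAt_id).add analyticAt_const).div (hJ_an w)
            (Jf_ne_zero α hw)
        have hf_an : AnalyticOnNhd ℂ (fun w => Jf α w ^ n • vhat n (actSL α w))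
            {w : ℂ | 0 < w.im} := fun w hw =>
          ((hJ_an w).pow n).smul ((hv_an (actSL α w)).comp (hact_an w hw))
        -- derivative of iterated derivatives of f
        have hT : ∀ (ℓ : ℕ) (w : ℂ), w ∈ {w : ℂ | 0 < w.im} →
            HasDerivAt (iteratedDeriv ℓ (fun w => Jf α w ^ n • vhat n (actSL α w)))
              (iteratedDeriv (ℓ + 1) (fun w => Jf α w ^ n • vhat n (actSL α w)) w) w := by
          intro ℓ w hw
          have h1 : AnalyticAt ℂ (iteratedDeriv ℓ (fun w => Jf α w ^ n • vhat n (actSL α w))) w := by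
            rw [iteratedDeriv_eq_iterate]
            exact hf_an.iterated_deriv ℓ w hw
          have h2 := h1.differentiableAt.hasDerivAt
          rwa [← iteratedDeriv_succ] at h2
        have hH : ∀ (μ : ℕ) (w : ℂ),
            HasDerivAt (iteratedDeriv μ (vhat n)) (iteratedDeriv (μ + 1) (vhat n) w) w := by
          intro μ w
          have h1 : AnalyticAt ℂ (iteratedDeriv μ (vhat n)) w := by
            rw [iteratedDeriv_eq_iterate]
            exact AnalyticOnNhd.iterated_deriv (s := Set.univ) (fun u _ => hv_an u) μ w trivial
          have h2 := h1.differentiableAt.hasDerivAt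
          rwa [← iteratedDeriv_succ] at h2
        -- derivative of the LHS function
        have hJm : HasDerivAt (fun w => Jf α w ^ ((n : ℤ) - 2 * ν))
            ((((n : ℤ) - 2 * ν : ℤ) : ℂ) * Jf α z ^ ((n : ℤ) - 2 * ν - 1) * ((α.1 1 0 : ℝ) : ℂ)) z := by
          have := (hasDerivAt_zpow ((n : ℤ) - 2 * ν) (Jf α z) (Or.inl hne)).comp z (hasDerivAt_Jf α z)
          simpa [Function.comp_def] using this
        have hcomp : HasDerivAt (fun w => iteratedDeriv ν (vhat n) (actSL α w))
            ((Jf α z ^ 2)⁻¹ • iteratedDeriv (ν + 1) (vhat n) (actSL α z)) z := by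
          have := HasDerivAt.scomp (h := actSL α) (x := z) (hH ν (actSL α z)) (hasDerivAt_actSL α hz)
          simpa [Function.comp_def] using this
        have hL : HasDerivAt (fun w => Jf α w ^ ((n : ℤ) - 2 * ν) • iteratedDeriv ν (vhat n) (actSL α w))
            (Jf α z ^ ((n : ℤ) - 2 * ν) • ((Jf α z ^ 2)⁻¹ • iteratedDeriv (ν + 1) (vhat n) (actSL α z))
              + ((((n : ℤ) - 2 * ν : ℤ) : ℂ) * Jf α z ^ ((n : ℤ) - 2 * ν - 1) * ((α.1 1 0 : ℝ) : ℂ))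
                  • iteratedDeriv ν (vhat n) (actSL α z)) z := hJm.smul hcomp
        -- derivative of the RHS function
        have hR : HasDerivAt
            (fun w => ∑ ℓ ∈ Finset.range (ν + 1), (Cc n ν ℓ * Kf α w ^ (ν - ℓ)) •
              iteratedDeriv ℓ (fun w => Jf α w ^ n • vhat n (actSL α w)) w)
            (∑ ℓ ∈ Finset.range (ν + 1),
              ((Cc n ν ℓ * Kf α z ^ (ν - ℓ)) •
                  iteratedDeriv (ℓ + 1) (fun w => Jf α w ^ n • vhat n (actSL α w)) z
                + (Cc n ν ℓ * (((ν - ℓ : ℕ) : ℂ) * Kf α z ^ (ν - ℓ - 1) * -(Kf α z ^ 2))) •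
                  iteratedDeriv ℓ (fun w => Jf α w ^ n • vhat n (actSL α w)) z)) z := by
          apply HasDerivAt.fun_sum
          intro ℓ _
          exact (((hasDerivAt_Kf α hz).pow (ν - ℓ)).const_mul (Cc n ν ℓ)).smul (hT ℓ z hzS)
        -- the two derivatives agree
        have hde := Filter.EventuallyEq.deriv_eq (f₁ := fun w =>
            Jf α w ^ ((n : ℤ) - 2 * ν) • iteratedDeriv ν (vhat n) (actSL α w))
          (f := fun w => ∑ ℓ ∈ Finset.range (ν + 1), (Cc n ν ℓ * Kf α w ^ (ν - ℓ)) •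
              iteratedDeriv ℓ (fun w => Jf α w ^ n • vhat n (actSL α w)) w)
          (Filter.eventuallyEq_of_mem (hSopen.mem_nhds hzS) (fun w hw => IH hν' w hw))
        have hvals : (Jf α z ^ ((n : ℤ) - 2 * ν) • ((Jf α z ^ 2)⁻¹ • iteratedDeriv (ν + 1) (vhat n) (actSL α z))
              + ((((n : ℤ) - 2 * ν : ℤ) : ℂ) * Jf α z ^ ((n : ℤ) - 2 * ν - 1) * ((α.1 1 0 : ℝ) : ℂ))
                  • iteratedDeriv ν (vhat n) (actSL α z))
            = ∑ ℓ ∈ Finset.range (ν + 1),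
              ((Cc n ν ℓ * Kf α z ^ (ν - ℓ)) •
                  iteratedDeriv (ℓ + 1) (fun w => Jf α w ^ n • vhat n (actSL α w)) z
                + (Cc n ν ℓ * (((ν - ℓ : ℕ) : ℂ) * Kf α z ^ (ν - ℓ - 1) * -(Kf α z ^ 2))) •
                  iteratedDeriv ℓ (fun w => Jf α w ^ n • vhat n (actSL α w)) z) := by
          rw [← hL.deriv, ← hR.deriv]; exact hde
        -- algebraic rearrangement
        have e1 : Jf α z ^ ((n : ℤ) - 2 * ((ν + 1 : ℕ) : ℤ))
            = Jf α z ^ ((n : ℤ) - 2 * ν) * (Jf α z ^ 2)⁻¹ := by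
          rw [← zpow_natCast (Jf α z) 2, ← _root_.zpow_neg, ← zpow_add₀ hne]
          congr 1
          push_cast
          ring
        have e2 : (((n : ℤ) - 2 * ν : ℤ) : ℂ) * Jf α z ^ ((n : ℤ) - 2 * ν - 1) * ((α.1 1 0 : ℝ) : ℂ)
            = ((((n : ℤ) - 2 * ν : ℤ) : ℂ) * Kf α z) * Jf α z ^ ((n : ℤ) - 2 * ν) := by
          rw [Kf, zpow_sub_one₀ hne]
          field_simp
        have split : Jf α z ^ ((n : ℤ) - 2 * ((ν + 1 : ℕ) : ℤ)) • iteratedDeriv (ν + 1) (vhat n) (actSL α z)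
            = (Jf α z ^ ((n : ℤ) - 2 * ν) • ((Jf α z ^ 2)⁻¹ • iteratedDeriv (ν + 1) (vhat n) (actSL α z))
                + ((((n : ℤ) - 2 * ν : ℤ) : ℂ) * Jf α z ^ ((n : ℤ) - 2 * ν - 1) * ((α.1 1 0 : ℝ) : ℂ))
                  • iteratedDeriv ν (vhat n) (actSL α z))
              - ((((n : ℤ) - 2 * ν : ℤ) : ℂ) * Kf α z) •
                  (Jf α z ^ ((n : ℤ) - 2 * ν) • iteratedDeriv ν (vhat n) (actSL α z)) := by
          rw [e1, smul_smul, smul_smul, e2, add_sub_cancel_right]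
        rw [split, hvals, IH hν' z hz, Finset.smul_sum, ← Finset.sum_sub_distrib]
        have hterm : ∀ ℓ ∈ Finset.range (ν + 1),
            ((Cc n ν ℓ * Kf α z ^ (ν - ℓ)) • iteratedDeriv (ℓ + 1) (fun w => Jf α w ^ n • vhat n (actSL α w)) z
                + (Cc n ν ℓ * (((ν - ℓ : ℕ) : ℂ) * Kf α z ^ (ν - ℓ - 1) * -Kf α z ^ 2)) •
                  iteratedDeriv ℓ (fun w => Jf α w ^ n • vhat n (actSL α w)) z)
              - ((((n : ℤ) - 2 * ν : ℤ) : ℂ) * Kf α z) • ((Cc n ν ℓ * Kf α z ^ (ν - ℓ)) •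
                  iteratedDeriv ℓ (fun w => Jf α w ^ n • vhat n (actSL α w)) z)
            = (Cc n ν ℓ * Kf α z ^ (ν - ℓ)) • iteratedDeriv (ℓ + 1) (fun w => Jf α w ^ n • vhat n (actSL α w)) z
                + (-((n : ℂ) - ν - ℓ) * Cc n ν ℓ * Kf α z ^ (ν - ℓ + 1)) •
                  iteratedDeriv ℓ (fun w => Jf α w ^ n • vhat n (actSL α w)) z := by
          intro ℓ hℓ
          have hlν : ℓ ≤ ν := Nat.lt_succ_iff.mp (Finset.mem_range.1 hℓ)
          rw [smul_smul, add_sub_assoc, ← sub_smul]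
          congr 2
          obtain ⟨d, hd⟩ : ∃ d, ν - ℓ = d := ⟨ν - ℓ, rfl⟩
          cases d with
          | zero =>
            have hl : (ℓ : ℂ) = (ν : ℂ) := by exact_mod_cast congrArg (Nat.cast : ℕ → ℂ) (by omega : ℓ = ν)
            rw [hd]
            push_cast
            norm_num
            linear_combination (-(Kf α z * Cc n ν ℓ)) * hl
          | succ d =>
            have hc : (ν : ℂ) - (ℓ : ℂ) = (d : ℂ) + 1 := by
              have h1 : ((ν - ℓ : ℕ) : ℂ) = ((d + 1 : ℕ) : ℂ) := by exact_mod_cast congrArg (Nat.cast : ℕ → ℂ) hd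
              rw [Nat.cast_sub hlν] at h1
              push_cast at h1
              exact h1
            rw [hd, show d + 1 - 1 = d from rfl, show d + 1 + 1 = d + 2 from rfl]
            push_cast
            linear_combination (Cc n ν ℓ * Kf α z ^ (d + 2)) * hc
        rw [Finset.sum_congr rfl hterm, Finset.sum_add_distrib]
        -- coefficient recursion, termwise
        have htl : ∀ ℓ ∈ Finset.range (ν + 1),
            (Cc n (ν + 1) (ℓ + 1) * Kf α z ^ (ν + 1 - (ℓ + 1))) • iteratedDeriv (ℓ + 1) (fun w => Jf α w ^ n • vhat n (actSL α w)) z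
            = (Cc n ν ℓ * Kf α z ^ (ν - ℓ)) • iteratedDeriv (ℓ + 1) (fun w => Jf α w ^ n • vhat n (actSL α w)) z
              + (if ℓ = ν then 0 else
                  (-((n : ℂ) - ν - ((ℓ + 1 : ℕ) : ℂ)) * Cc n ν (ℓ + 1) * Kf α z ^ (ν - (ℓ + 1) + 1)) •
                    iteratedDeriv (ℓ + 1) (fun w => Jf α w ^ n • vhat n (actSL α w)) z) := by
          intro ℓ hℓ
          by_cases hcase : ℓ = ν
          · rw [hcase, if_pos rfl, add_zero, show ν + 1 - (ν + 1) = ν - ν from by omega, Cc_diag]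
          · have hj : ℓ + 1 ≤ ν := by have := Finset.mem_range.1 hℓ; omega
            rw [if_neg hcase, show ν + 1 - (ℓ + 1) = ν - ℓ from by omega,
              show ν - (ℓ + 1) + 1 = ν - ℓ from by omega, ← add_smul]
            congr 1
            rw [Cc_mid n ν ℓ hj hν]
            push_cast
            ring
        have h1 : ∑ ℓ ∈ Finset.range (ν + 1 + 1), (Cc n (ν + 1) ℓ * Kf α z ^ (ν + 1 - ℓ)) • iteratedDeriv ℓ (fun w => Jf α w ^ n • vhat n (actSL α w)) z
            = (∑ ℓ ∈ Finset.range (ν + 1), (Cc n (ν + 1) (ℓ + 1) * Kf α z ^ (ν + 1 - (ℓ + 1))) • iteratedDeriv (ℓ + 1) (fun w => Jf α w ^ n • vhat n (actSL α w)) z)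
              + (Cc n (ν + 1) 0 * Kf α z ^ (ν + 1 - 0)) • iteratedDeriv 0 (fun w => Jf α w ^ n • vhat n (actSL α w)) z :=
          Finset.sum_range_succ' _ _
        have h2 : (∑ ℓ ∈ Finset.range (ν + 1), (Cc n (ν + 1) (ℓ + 1) * Kf α z ^ (ν + 1 - (ℓ + 1))) • iteratedDeriv (ℓ + 1) (fun w => Jf α w ^ n • vhat n (actSL α w)) z)
            = (∑ ℓ ∈ Finset.range (ν + 1), (Cc n ν ℓ * Kf α z ^ (ν - ℓ)) • iteratedDeriv (ℓ + 1) (fun w => Jf α w ^ n • vhat n (actSL α w)) z)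
              + ∑ ℓ ∈ Finset.range (ν + 1), (if ℓ = ν then 0 else
                  (-((n : ℂ) - ν - ((ℓ + 1 : ℕ) : ℂ)) * Cc n ν (ℓ + 1) * Kf α z ^ (ν - (ℓ + 1) + 1)) •
                    iteratedDeriv (ℓ + 1) (fun w => Jf α w ^ n • vhat n (actSL α w)) z) := by
          rw [← Finset.sum_add_distrib]
          exact Finset.sum_congr rfl htl
        have h3 : (∑ ℓ ∈ Finset.range (ν + 1), (if ℓ = ν then 0 else
                  (-((n : ℂ) - ν - ((ℓ + 1 : ℕ) : ℂ)) * Cc n ν (ℓ + 1) * Kf α z ^ (ν - (ℓ + 1) + 1)) •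
                    iteratedDeriv (ℓ + 1) (fun w => Jf α w ^ n • vhat n (actSL α w)) z))
            = ∑ ℓ ∈ Finset.range ν,
                  (-((n : ℂ) - ν - ((ℓ + 1 : ℕ) : ℂ)) * Cc n ν (ℓ + 1) * Kf α z ^ (ν - (ℓ + 1) + 1)) •
                    iteratedDeriv (ℓ + 1) (fun w => Jf α w ^ n • vhat n (actSL α w)) z := by
          rw [Finset.sum_range_succ, if_pos rfl, add_zero]
          exact Finset.sum_congr rfl (fun ℓ hℓ => if_neg (by have := Finset.mem_range.1 hℓ; omega))
        have h4 : ∑ ℓ ∈ Finset.range (ν + 1), (-((n : ℂ) - ν - ℓ) * Cc n ν ℓ * Kf α z ^ (ν - ℓ + 1)) • iteratedDeriv ℓ (fun w => Jf α w ^ n • vhat n (actSL α w)) z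
            = (∑ ℓ ∈ Finset.range ν,
                  (-((n : ℂ) - ν - ((ℓ + 1 : ℕ) : ℂ)) * Cc n ν (ℓ + 1) * Kf α z ^ (ν - (ℓ + 1) + 1)) •
                    iteratedDeriv (ℓ + 1) (fun w => Jf α w ^ n • vhat n (actSL α w)) z)
              + (-((n : ℂ) - ν - ((0 : ℕ) : ℂ)) * Cc n ν 0 * Kf α z ^ (ν - 0 + 1)) • iteratedDeriv 0 (fun w => Jf α w ^ n • vhat n (actSL α w)) z :=
          Finset.sum_range_succ' _ _
        have h5 : (Cc n (ν + 1) 0 * Kf α z ^ (ν + 1 - 0)) • iteratedDeriv 0 (fun w => Jf α w ^ n • vhat n (actSL α w)) z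
            = (-((n : ℂ) - ν - ((0 : ℕ) : ℂ)) * Cc n ν 0 * Kf α z ^ (ν - 0 + 1)) • iteratedDeriv 0 (fun w => Jf α w ^ n • vhat n (actSL α w)) z := by
          rw [show ν + 1 - 0 = ν - 0 + 1 from by omega]
          congr 1
          rw [Cc_zero n ν hν]
          push_cast
          ring
        rw [h1, h2, h3, h4, h5]
        abel

/-- For α ∈ SL(2,ℝ) and 0 ≤ ν ≤ n,
((D^ν v̂_n) |_{−n+2ν} α)(z) =
Σ_{ℓ=0}^{ν} [(−1)^{ν−ℓ} ν! (n−ℓ)! / (ℓ! (ν−ℓ)! (n−ν)!)] 𝔎(α,z)^{ν−ℓ}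
  D^ℓ(v̂_n |_{−n} α)(z). -/
theorem iteratedDeriv_vhat_slash (n ν : ℕ) (hν : ν ≤ n) (α : SL2R)
    (z : ℂ) (hz : 0 < z.im) :
    Jf α z ^ ((n : ℤ) - 2 * ν) • iteratedDeriv ν (vhat n) (actSL α z) =
      ∑ ℓ ∈ Finset.range (ν + 1),
        ((-1 : ℂ) ^ (ν - ℓ) * (ν.factorial : ℂ) * ((n - ℓ).factorial : ℂ) /
              ((ℓ.factorial : ℂ) * ((ν - ℓ).factorial : ℂ) * ((n - ν).factorial : ℂ)) *
            Kf α z ^ (ν - ℓ)) •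
          iteratedDeriv ℓ (fun w => Jf α w ^ n • vhat n (actSL α w)) z := by
  simpa only [Cc] using aux_main n α ν hν z hz
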